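/- For |p| < 1 and |q| < 1, the special value Γ_{p,q}(−1) = (p;p²)_∞ (q;q²)_∞ / 2 holds, where (a;b)_∞ = ∏_{k≥0}(1 − a b^k). -/

import Mathlib

/-- The elliptic Gamma function
`Γ_{p,q}(z) = ∏_{i,j ≥ 0} (1 - p^{i+1} q^{j+1}/z)/(1 - p^i q^j z)`. -/
noncomputable def ellGamma (p q z : ℂ) : ℂ :=
  ∏' ij : ℕ × ℕ,
    ((1 - p ^ (ij.1 + 1) * q ^ (ij.2 + 1) / z) / (1 - p ^ ij.1 * q ^ ij.2 * z))

/-- The infinite q-Pochhammer symbol `(a;b)_∞ = ∏_{k ≥ 0} (1 - a b^k)`. -/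
noncomputable def qPoch (a b : ℂ) : ℂ := ∏' k : ℕ, (1 - a * b ^ k)

open Filter Finset Topology

namespace EllGammaAux

/-- summability of logs from summable norms -/
lemma summable_log_one_add {ι : Type*} {x : ι → ℂ} (hx : Summable fun i => ‖x i‖) :
    Summable fun i => Complex.log (1 + x i) := by
  apply Summable.of_norm_bounded_eventually (g := fun i => 3/2 * ‖x i‖) (hx.mul_left _)
  have h0 : ∀ᶠ i in Filter.cofinite, ‖x i‖ < 1/2 := by
    have h := hx.tendsto_cofinite_zero
    have : Set.Iio (1/2 : ℝ) ∈ nhds (0:ℝ) := Iio_mem_nhds (by norm_num)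
    filter_upwards [h.eventually this] with i hi using hi
  filter_upwards [h0] with i hi
  exact Complex.norm_log_one_add_half_le_self hi.le

/-- key: products of `1 + x i` with summable `x` and nonvanishing terms are
multipliable with nonzero product. -/
lemma mult_and_ne {ι : Type*} {x : ι → ℂ} (hx : Summable fun i => ‖x i‖)
    (hn : ∀ i, 1 + x i ≠ 0) :
    Multipliable (fun i => 1 + x i) ∧ (∏' i, (1 + x i)) ≠ 0 := by
  have hlog := summable_log_one_add hx
  have hm : Multipliable (fun i => 1 + x i) :=
    Complex.multipliable_of_summable_log hlog
  refine ⟨hm, ?_⟩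
  have h := Complex.cexp_tsum_eq_tprod (f := fun i => 1 + x i) hn hlog
  rw [show (∏' i, (1 + x i)) = _ from h.symm]
  exact Complex.exp_ne_zero _

lemma norm_one_add_ge (w : ℂ) : 1 - ‖w‖ ≤ ‖1 + w‖ := by
  simpa [sub_neg_eq_add] using norm_sub_norm_le (1 : ℂ) (-w)

lemma one_add_ne {w : ℂ} (hw : ‖w‖ < 1) : 1 + w ≠ 0 := by
  intro h
  have : w = -1 := by linear_combination h
  rw [this] at hw
  simp at hw

/-- telescoping products over ℕ -/
lemma telescope {u : ℕ → ℂ} {L : ℂ} (hu : ∀ n, u n ≠ 0) (hL : Tendsto u atTop (𝓝 L))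
    (hm : Multipliable fun n => u (n + 1) / u n) :
    ∏' n, u (n + 1) / u n = L / u 0 := by
  have hpp : ∀ N, ∏ n ∈ Finset.range N, (u (n + 1) / u n) = u N / u 0 := by
    intro N
    induction N with
    | zero => simp [div_self (hu 0)]
    | succ N ih =>
      rw [Finset.prod_range_succ, ih, div_mul_div_comm, mul_comm (u 0) (u N)]
      exact mul_div_mul_left _ _ (hu N)
  have h1 := hm.hasProd.tendsto_prod_nat
  have h2 : Tendsto (fun N => u N / u 0) atTop (𝓝 (L / u 0)) := hL.div_const (u 0)
  exact tendsto_nhds_unique (h1.congr hpp) h2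

/-- Euler's identity: `∏ (1+z^{n+1})⁻¹ = ∏ (1 - z^{2k+1})`. -/
lemma euler {z : ℂ} (hz : ‖z‖ < 1) :
    ∏' n : ℕ, (1 + z ^ (n + 1))⁻¹ = ∏' k : ℕ, (1 - z ^ (2 * k + 1)) := by
  have hz0 : (0:ℝ) ≤ ‖z‖ := norm_nonneg z
  have hgeo : Summable fun n : ℕ => ‖z‖ ^ n := summable_geometric_of_lt_one hz0 hz
  have hlt : ∀ n : ℕ, ‖z ^ (n + 1)‖ < 1 := by
    intro n
    rw [norm_pow]
    exact pow_lt_one₀ hz0 hz (Nat.succ_ne_zero n)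
  have hne : ∀ n : ℕ, (1 : ℂ) + z ^ (n + 1) ≠ 0 := fun n => one_add_ne (hlt n)
  have hne' : ∀ n : ℕ, (1 : ℂ) - z ^ (n + 1) ≠ 0 := by
    intro n
    have := one_add_ne (w := -(z ^ (n+1))) (by simpa using hlt n)
    simpa [sub_eq_add_neg] using this
  -- summability of various norms
  have hsum1 : Summable fun n : ℕ => ‖z ^ (n + 1)‖ := by
    apply Summable.of_nonneg_of_le (fun n => norm_nonneg _) (fun n => ?_) hgeo
    rw [norm_pow]
    exact pow_le_pow_of_le_one hz0 hz.le (Nat.le_succ n)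
  have hsum2 : ∀ c : ℂ, Summable fun n : ℕ => ‖c * z ^ (n + 1)‖ := by
    intro c
    simpa [norm_mul] using hsum1.mul_left ‖c‖
  -- multipliability of the four basic products
  have m1 : Multipliable fun n : ℕ => 1 + z ^ (n + 1) := (mult_and_ne hsum1 hne).1
  have m2 : Multipliable fun n : ℕ => 1 - z ^ (n + 1) := by
    have := (mult_and_ne (x := fun n : ℕ => -(z ^ (n + 1)))
      (by simpa using hsum1) (fun n => by simpa [sub_eq_add_neg] using hne' n)).1
    exact this.congr fun n => by ring
  -- the inverse family
  have hinv : ∀ n : ℕ, (1 + z ^ (n + 1))⁻¹ = 1 + -(z ^ (n + 1)) / (1 + z ^ (n + 1)) := by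
    intro n
    have h : (1 + -(z ^ (n + 1)) / (1 + z ^ (n + 1))) * (1 + z ^ (n + 1)) = 1 := by
      rw [add_mul, div_mul_cancel₀ _ (hne n), one_mul]
      ring
    exact (eq_inv_of_mul_eq_one_left h).symm
  have hsuminv : Summable fun n : ℕ => ‖-(z ^ (n + 1)) / (1 + z ^ (n + 1))‖ := by
    apply Summable.of_nonneg_of_le (fun n => norm_nonneg _) (fun n => ?_)
      (hsum1.mul_right (1 - ‖z‖)⁻¹)
    have hd : 1 - ‖z‖ ≤ ‖1 + z ^ (n + 1)‖ := by
      refine le_trans ?_ (norm_one_add_ge (z ^ (n + 1)))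
      have : ‖z ^ (n + 1)‖ ≤ ‖z‖ := by
        rw [norm_pow]; exact pow_le_of_le_one hz0 hz.le (Nat.succ_ne_zero n)
      linarith
    rw [norm_div, norm_neg, div_eq_mul_inv]
    exact mul_le_mul_of_nonneg_left (inv_anti₀ (by linarith) hd) (norm_nonneg _)
  have minv : Multipliable fun n : ℕ => (1 + z ^ (n + 1))⁻¹ := by
    have := (mult_and_ne hsuminv (fun n => by rw [← hinv n]; exact inv_ne_zero (hne n))).1
    exact this.congr fun n => (hinv n).symm
  -- odd and even subfamilies
  have hsumodd : Summable fun k : ℕ => ‖-(z ^ (2 * k + 1))‖ := by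
    apply Summable.of_nonneg_of_le (fun n => norm_nonneg _) (fun k => ?_) hgeo
    rw [norm_neg, norm_pow]
    exact pow_le_pow_of_le_one hz0 hz.le (by omega)
  have hsumeven : Summable fun k : ℕ => ‖-(z ^ (2 * k + 2))‖ := by
    apply Summable.of_nonneg_of_le (fun n => norm_nonneg _) (fun k => ?_) hgeo
    rw [norm_neg, norm_pow]
    exact pow_le_pow_of_le_one hz0 hz.le (by omega)
  have hneodd : ∀ k : ℕ, (1:ℂ) + -(z ^ (2 * k + 1)) ≠ 0 := by
    intro k
    apply one_add_ne
    rw [norm_neg, norm_pow]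
    exact pow_lt_one₀ hz0 hz (by omega)
  have hneeven : ∀ k : ℕ, (1:ℂ) + -(z ^ (2 * k + 2)) ≠ 0 := by
    intro k
    apply one_add_ne
    rw [norm_neg, norm_pow]
    exact pow_lt_one₀ hz0 hz (by omega)
  have modd : Multipliable fun k : ℕ => 1 - z ^ (2 * k + 1) :=
    ((mult_and_ne hsumodd hneodd).1).congr fun k => by ring
  have meven : Multipliable fun k : ℕ => 1 - z ^ (2 * k + 2) :=
    ((mult_and_ne hsumeven hneeven).1).congr fun k => by ring
  have heven_ne : (∏' k : ℕ, (1 - z ^ (2 * k + 2))) ≠ 0 := by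
    have h := (mult_and_ne hsumeven hneeven).2
    rwa [tprod_congr (f := fun k : ℕ => 1 + -(z ^ (2*k+2)))
      (g := fun k : ℕ => 1 - z ^ (2*k+2)) (fun k => by ring)] at h
  -- identity (1+w)(1-w) = 1-w^2 termwise
  have e2 : (∏' n : ℕ, (1 + z ^ (n + 1))) * (∏' n : ℕ, (1 - z ^ (n + 1)))
      = ∏' n : ℕ, (1 - z ^ (2 * n + 2)) := by
    rw [← Multipliable.tprod_mul m1 m2]
    exact tprod_congr fun n => by ring
  -- parity split
  have e3 : (∏' k : ℕ, (1 - z ^ (2 * k + 1))) * (∏' k : ℕ, (1 - z ^ (2 * k + 2)))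
      = ∏' n : ℕ, (1 - z ^ (n + 1)) := by
    exact tprod_even_mul_odd (f := fun n : ℕ => 1 - z ^ (n + 1)) modd meven
  -- Phi * Eodd = 1
  have e4 : (∏' n : ℕ, (1 + z ^ (n + 1))) * (∏' k : ℕ, (1 - z ^ (2 * k + 1))) = 1 := by
    apply mul_right_cancel₀ heven_ne
    rw [one_mul, mul_assoc, e3, e2]
  -- conclude
  have e1 : (∏' n : ℕ, (1 + z ^ (n + 1))⁻¹) * (∏' n : ℕ, (1 + z ^ (n + 1))) = 1 := by
    rw [← Multipliable.tprod_mul minv m1]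
    rw [tprod_congr (g := fun _ : ℕ => (1:ℂ)) (fun n => inv_mul_cancel₀ (hne n))]
    exact tprod_one
  have hPhi_ne : (∏' n : ℕ, (1 + z ^ (n + 1))) ≠ 0 := by
    intro h; rw [h, mul_zero] at e1; exact zero_ne_one e1
  have : (∏' n : ℕ, (1 + z ^ (n + 1))⁻¹) = (∏' n : ℕ, (1 + z ^ (n + 1)))⁻¹ :=
    eq_inv_of_mul_eq_one_left (by rw [mul_comm] at e1 ⊢; exact e1)
  rw [this]
  exact (eq_inv_of_mul_eq_one_left (by rw [mul_comm] at e4; exact e4)).symm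


/-- multipliability of the inverse family -/
lemma multipliable_inv_one_add {z : ℂ} (hz : ‖z‖ < 1) :
    Multipliable fun n : ℕ => (1 + z ^ (n + 1))⁻¹ := by
  have hz0 : (0:ℝ) ≤ ‖z‖ := norm_nonneg z
  have hgeo : Summable fun n : ℕ => ‖z‖ ^ n := summable_geometric_of_lt_one hz0 hz
  have hne : ∀ n : ℕ, (1 : ℂ) + z ^ (n + 1) ≠ 0 := by
    intro n
    apply one_add_ne
    rw [norm_pow]
    exact pow_lt_one₀ hz0 hz (Nat.succ_ne_zero n)
  have hsum1 : Summable fun n : ℕ => ‖z ^ (n + 1)‖ := by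
    apply Summable.of_nonneg_of_le (fun n => norm_nonneg _) (fun n => ?_) hgeo
    rw [norm_pow]
    exact pow_le_pow_of_le_one hz0 hz.le (Nat.le_succ n)
  have hinv : ∀ n : ℕ, (1 + z ^ (n + 1))⁻¹ = 1 + -(z ^ (n + 1)) / (1 + z ^ (n + 1)) := by
    intro n
    have h : (1 + -(z ^ (n + 1)) / (1 + z ^ (n + 1))) * (1 + z ^ (n + 1)) = 1 := by
      rw [add_mul, div_mul_cancel₀ _ (hne n), one_mul]
      ring
    exact (eq_inv_of_mul_eq_one_left h).symm
  have hsuminv : Summable fun n : ℕ => ‖-(z ^ (n + 1)) / (1 + z ^ (n + 1))‖ := by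
    apply Summable.of_nonneg_of_le (fun n => norm_nonneg _) (fun n => ?_)
      (hsum1.mul_right (1 - ‖z‖)⁻¹)
    have hd : 1 - ‖z‖ ≤ ‖1 + z ^ (n + 1)‖ := by
      refine le_trans ?_ (norm_one_add_ge (z ^ (n + 1)))
      have : ‖z ^ (n + 1)‖ ≤ ‖z‖ := by
        rw [norm_pow]; exact pow_le_of_le_one hz0 hz.le (Nat.succ_ne_zero n)
      linarith
    rw [norm_div, norm_neg, div_eq_mul_inv]
    exact mul_le_mul_of_nonneg_left (inv_anti₀ (by linarith) hd) (norm_nonneg _)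
  have := (mult_and_ne hsuminv (fun n => by rw [← hinv n]; exact inv_ne_zero (hne n))).1
  exact this.congr fun n => (hinv n).symm

lemma mult_of_sub_summable {ι : Type*} {u v : ι → ℂ} {c : ℝ} (hc : 0 < c)
    (hu : ∀ n, u n ≠ 0) (hv : ∀ n, v n ≠ 0) (hlbv : ∀ n, c ≤ ‖v n‖)
    (hs : Summable fun n => ‖u n - v n‖) : Multipliable fun n => u n / v n := by
  have hx : Summable fun n => ‖(u n - v n) / v n‖ := by
    apply Summable.of_nonneg_of_le (fun n => norm_nonneg _) (fun n => ?_) (hs.mul_right c⁻¹)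
    rw [norm_div, div_eq_mul_inv]
    exact mul_le_mul_of_nonneg_left (inv_anti₀ hc (hlbv n)) (norm_nonneg _)
  have heq : ∀ n, u n / v n = 1 + (u n - v n) / v n := by
    intro n
    rw [add_div' _ _ _ (hv n)]
    congr 1
    ring
  have h := (mult_and_ne hx (fun n => by rw [← heq n]; exact div_ne_zero (hu n) (hv n))).1
  exact h.congr fun n => (heq n).symm

section Main

variable {p q : ℂ}

/-- the two partial-quotient factors -/
noncomputable def A (p q : ℂ) (ij : ℕ × ℕ) : ℂ :=
  (1 + p ^ (ij.1 + 1) * q ^ (ij.2 + 1)) / (1 + p ^ ij.1 * q ^ (ij.2 + 1))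

noncomputable def B (p q : ℂ) (ij : ℕ × ℕ) : ℂ :=
  (1 + p ^ ij.1 * q ^ (ij.2 + 1)) / (1 + p ^ ij.1 * q ^ ij.2)

lemma hbound (hp : ‖p‖ < 1) (hq : ‖q‖ < 1) :
    ∀ i j : ℕ, i + j ≠ 0 → ‖p ^ i * q ^ j‖ ≤ max ‖p‖ ‖q‖ := by
  intro i j hij
  rcases Nat.eq_zero_or_pos i with hi | hi
  · rw [hi, pow_zero, one_mul, norm_pow]
    exact le_trans (pow_le_of_le_one (norm_nonneg q) hq.le (by omega)) (le_max_right _ _)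
  · rw [norm_mul, norm_pow, norm_pow]
    calc ‖p‖ ^ i * ‖q‖ ^ j ≤ ‖p‖ * 1 :=
          mul_le_mul (pow_le_of_le_one (norm_nonneg p) hp.le (by omega))
            (pow_le_one₀ (norm_nonneg q) hq.le) (pow_nonneg (norm_nonneg q) j)
            (norm_nonneg p)
      _ ≤ max ‖p‖ ‖q‖ := by rw [mul_one]; exact le_max_left _ _

lemma hne2 (hp : ‖p‖ < 1) (hq : ‖q‖ < 1) : ∀ i j : ℕ, (1:ℂ) + p ^ i * q ^ j ≠ 0 := by
  intro i j
  by_cases hij : i + j = 0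
  · obtain ⟨hi, hj⟩ := Nat.add_eq_zero.mp hij
    rw [hi, hj]
    norm_num
  · exact one_add_ne (lt_of_le_of_lt (hbound hp hq i j hij) (max_lt hp hq))

lemma hlb (hp : ‖p‖ < 1) (hq : ‖q‖ < 1) :
    ∀ i j : ℕ, 1 - max ‖p‖ ‖q‖ ≤ ‖(1:ℂ) + p ^ i * q ^ j‖ := by
  intro i j
  by_cases hij : i + j = 0
  · obtain ⟨hi, hj⟩ := Nat.add_eq_zero.mp hij
    have h2 : ‖(1:ℂ) + p ^ i * q ^ j‖ = 2 := by
      rw [hi, hj]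
      norm_num
    rw [h2]
    have := le_max_left ‖p‖ ‖q‖
    have := norm_nonneg p
    linarith
  · calc 1 - max ‖p‖ ‖q‖ ≤ 1 - ‖p ^ i * q ^ j‖ := by linarith [hbound hp hq i j hij]
      _ ≤ ‖(1:ℂ) + p ^ i * q ^ j‖ := norm_one_add_ge _

lemma hpos (hp : ‖p‖ < 1) (hq : ‖q‖ < 1) : (0:ℝ) < 1 - max ‖p‖ ‖q‖ := by
  have := max_lt hp hq
  linarith

lemma base_summable (hp : ‖p‖ < 1) (hq : ‖q‖ < 1) :
    Summable fun ij : ℕ × ℕ => ‖p‖ ^ ij.1 * ‖q‖ ^ ij.2 :=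
  Summable.mul_of_nonneg (summable_geometric_of_lt_one (norm_nonneg p) hp)
    (summable_geometric_of_lt_one (norm_nonneg q) hq)
    (fun i => pow_nonneg (norm_nonneg p) i) (fun j => pow_nonneg (norm_nonneg q) j)

lemma multA (hp : ‖p‖ < 1) (hq : ‖q‖ < 1) : Multipliable (A p q) := by
  refine mult_of_sub_summable (u := fun ij : ℕ × ℕ => 1 + p ^ (ij.1 + 1) * q ^ (ij.2 + 1))
    (v := fun ij : ℕ × ℕ => 1 + p ^ ij.1 * q ^ (ij.2 + 1)) (hpos hp hq)
    (fun ij => hne2 hp hq (ij.1 + 1) (ij.2 + 1)) (fun ij => hne2 hp hq ij.1 (ij.2 + 1))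
    (fun ij => hlb hp hq ij.1 (ij.2 + 1)) ?_
  apply Summable.of_nonneg_of_le (fun ij => norm_nonneg _) (fun ij => ?_)
    ((base_summable hp hq).mul_right ‖q * (p - 1)‖)
  have heq : (1 + p ^ (ij.1 + 1) * q ^ (ij.2 + 1)) - (1 + p ^ ij.1 * q ^ (ij.2 + 1))
      = p ^ ij.1 * q ^ ij.2 * (q * (p - 1)) := by ring
  rw [heq, norm_mul]
  exact mul_le_mul_of_nonneg_right (le_of_eq (by rw [norm_mul, norm_pow, norm_pow]))
    (norm_nonneg _)

lemma multB (hp : ‖p‖ < 1) (hq : ‖q‖ < 1) : Multipliable (B p q) := by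
  refine mult_of_sub_summable (u := fun ij : ℕ × ℕ => 1 + p ^ ij.1 * q ^ (ij.2 + 1))
    (v := fun ij : ℕ × ℕ => 1 + p ^ ij.1 * q ^ ij.2) (hpos hp hq)
    (fun ij => hne2 hp hq ij.1 (ij.2 + 1)) (fun ij => hne2 hp hq ij.1 ij.2)
    (fun ij => hlb hp hq ij.1 ij.2) ?_
  apply Summable.of_nonneg_of_le (fun ij => norm_nonneg _) (fun ij => ?_)
    ((base_summable hp hq).mul_right ‖q - 1‖)
  have heq : (1 + p ^ ij.1 * q ^ (ij.2 + 1)) - (1 + p ^ ij.1 * q ^ ij.2)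
      = p ^ ij.1 * q ^ ij.2 * (q - 1) := by ring
  rw [heq, norm_mul]
  exact mul_le_mul_of_nonneg_right (le_of_eq (by rw [norm_mul, norm_pow, norm_pow]))
    (norm_nonneg _)

lemma sliceA (hp : ‖p‖ < 1) (hq : ‖q‖ < 1) (j : ℕ) :
    Multipliable fun i : ℕ => (1 + p ^ (i + 1) * q ^ (j + 1)) / (1 + p ^ i * q ^ (j + 1)) := by
  refine mult_of_sub_summable (u := fun i : ℕ => 1 + p ^ (i + 1) * q ^ (j + 1))
    (v := fun i : ℕ => 1 + p ^ i * q ^ (j + 1)) (hpos hp hq)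
    (fun i => hne2 hp hq (i + 1) (j + 1)) (fun i => hne2 hp hq i (j + 1))
    (fun i => hlb hp hq i (j + 1)) ?_
  apply Summable.of_nonneg_of_le (fun i => norm_nonneg _) (fun i => ?_)
    ((summable_geometric_of_lt_one (norm_nonneg p) hp).mul_right ‖q ^ (j + 1) * (p - 1)‖)
  have heq : (1 + p ^ (i + 1) * q ^ (j + 1)) - (1 + p ^ i * q ^ (j + 1))
      = p ^ i * (q ^ (j + 1) * (p - 1)) := by ring
  rw [heq, norm_mul, norm_pow]

lemma sliceB (hp : ‖p‖ < 1) (hq : ‖q‖ < 1) (i : ℕ) :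
    Multipliable fun j : ℕ => (1 + p ^ i * q ^ (j + 1)) / (1 + p ^ i * q ^ j) := by
  refine mult_of_sub_summable (u := fun j : ℕ => 1 + p ^ i * q ^ (j + 1))
    (v := fun j : ℕ => 1 + p ^ i * q ^ j) (hpos hp hq)
    (fun j => hne2 hp hq i (j + 1)) (fun j => hne2 hp hq i j)
    (fun j => hlb hp hq i j) ?_
  apply Summable.of_nonneg_of_le (fun j => norm_nonneg _) (fun j => ?_)
    ((summable_geometric_of_lt_one (norm_nonneg q) hq).mul_right ‖p ^ i * (q - 1)‖)
  have heq : (1 + p ^ i * q ^ (j + 1)) - (1 + p ^ i * q ^ j)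
      = q ^ j * (p ^ i * (q - 1)) := by ring
  rw [heq, norm_mul, norm_pow]

lemma tprodA (hp : ‖p‖ < 1) (hq : ‖q‖ < 1) :
    ∏' ij : ℕ × ℕ, A p q ij = ∏' j : ℕ, (1 + q ^ (j + 1))⁻¹ := by
  have hAs : Multipliable fun x : ℕ × ℕ => A p q (x.2, x.1) :=
    (((Equiv.prodComm ℕ ℕ).multipliable_iff (f := A p q)).2 (multA hp hq)).congr
      fun x => rfl
  have h1 : ∏' x : ℕ × ℕ, A p q (x.2, x.1) = ∏' ij : ℕ × ℕ, A p q ij := by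
    rw [← (Equiv.prodComm ℕ ℕ).tprod_eq (A p q)]
    exact tprod_congr fun x => rfl
  have e := Multipliable.tprod_prod' (f := fun x : ℕ × ℕ => A p q (x.2, x.1)) hAs
    (fun j => (sliceA hp hq j).congr fun i => rfl)
  rw [← h1, e]
  apply tprod_congr
  intro j
  have hu : ∀ i : ℕ, (fun i : ℕ => 1 + p ^ i * q ^ (j + 1)) i ≠ 0 :=
    fun i => hne2 hp hq i (j + 1)
  have hL : Filter.Tendsto (fun i : ℕ => 1 + p ^ i * q ^ (j + 1)) atTop (𝓝 1) := by
    have h0 : Filter.Tendsto (fun i : ℕ => p ^ i) atTop (𝓝 0) :=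
      tendsto_pow_atTop_nhds_zero_of_norm_lt_one hp
    have := (h0.mul_const (q ^ (j + 1))).const_add 1
    simpa using this
  have h := telescope hu hL (sliceA hp hq j)
  calc ∏' i : ℕ, A p q (i, j)
      = 1 / (1 + p ^ 0 * q ^ (j + 1)) := h
    _ = (1 + q ^ (j + 1))⁻¹ := by rw [pow_zero, one_mul, one_div]

lemma tprodB (hp : ‖p‖ < 1) (hq : ‖q‖ < 1) :
    ∏' ij : ℕ × ℕ, B p q ij = ∏' i : ℕ, (1 + p ^ i)⁻¹ := by
  rw [Multipliable.tprod_prod' (multB hp hq) (fun i => (sliceB hp hq i).congr fun j => rfl)]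
  apply tprod_congr
  intro i
  have hu : ∀ j : ℕ, (fun j : ℕ => 1 + p ^ i * q ^ j) j ≠ 0 :=
    fun j => hne2 hp hq i j
  have hL : Filter.Tendsto (fun j : ℕ => 1 + p ^ i * q ^ j) atTop (𝓝 1) := by
    have h0 : Filter.Tendsto (fun j : ℕ => q ^ j) atTop (𝓝 0) :=
      tendsto_pow_atTop_nhds_zero_of_norm_lt_one hq
    have := (h0.const_mul (p ^ i)).const_add 1
    simpa using this
  have h := telescope hu hL (sliceB hp hq i)
  calc ∏' j : ℕ, B p q (i, j)
      = 1 / (1 + p ^ i * q ^ 0) := h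
    _ = (1 + p ^ i)⁻¹ := by rw [pow_zero, mul_one, one_div]

lemma main_aux (hp : ‖p‖ < 1) (hq : ‖q‖ < 1) :
    ∏' ij : ℕ × ℕ, ((1 + p ^ (ij.1 + 1) * q ^ (ij.2 + 1)) / (1 + p ^ ij.1 * q ^ ij.2))
      = (∏' j : ℕ, (1 + q ^ (j + 1))⁻¹) * ∏' i : ℕ, (1 + p ^ i)⁻¹ := by
  have hsplit : ∀ ij : ℕ × ℕ,
      (1 + p ^ (ij.1 + 1) * q ^ (ij.2 + 1)) / (1 + p ^ ij.1 * q ^ ij.2)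
        = A p q ij * B p q ij := by
    intro ij
    unfold A B
    rw [div_mul_div_cancel₀ (hne2 hp hq ij.1 (ij.2 + 1))]
  rw [tprod_congr hsplit, Multipliable.tprod_mul (multA hp hq) (multB hp hq), tprodA hp hq, tprodB hp hq]

end Main

end EllGammaAux

open EllGammaAux in
/-- The special value `Γ_{p,q}(−1) = (p;p²)_∞ (q;q²)_∞ / 2`. -/
theorem ellGamma_neg_one (p q : ℂ) (hp : ‖p‖ < 1) (hq : ‖q‖ < 1) :
    ellGamma p q (-1) = qPoch p (p ^ 2) * qPoch q (q ^ 2) / 2 := by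
  have h1 : ellGamma p q (-1)
      = ∏' ij : ℕ × ℕ, ((1 + p ^ (ij.1 + 1) * q ^ (ij.2 + 1)) / (1 + p ^ ij.1 * q ^ ij.2)) := by
    unfold ellGamma
    exact tprod_congr fun ij => by simp [div_neg, mul_neg, sub_neg_eq_add]
  rw [h1, main_aux hp hq]
  have h2 : ∏' j : ℕ, ((1:ℂ) + q ^ (j + 1))⁻¹ = qPoch q (q ^ 2) := by
    rw [euler hq]
    unfold qPoch
    exact tprod_congr fun k => by rw [pow_succ', pow_mul]
  have h3 : ∏' i : ℕ, ((1:ℂ) + p ^ i)⁻¹ = qPoch p (p ^ 2) / 2 := by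
    have e := tprod_eq_zero_mul' (f := fun i : ℕ => ((1:ℂ) + p ^ i)⁻¹)
      (multipliable_inv_one_add hp)
    rw [e, euler hp]
    have h4 : (∏' k : ℕ, ((1:ℂ) - p ^ (2 * k + 1))) = qPoch p (p ^ 2) := by
      unfold qPoch
      exact tprod_congr fun k => by rw [pow_succ', pow_mul]
    rw [h4]
    show ((1:ℂ) + p ^ 0)⁻¹ * qPoch p (p ^ 2) = qPoch p (p ^ 2) / 2
    rw [show ((1:ℂ) + p ^ 0)⁻¹ = 2⁻¹ by norm_num]
    ring
  rw [h2, h3]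
  ring
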